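/- Quantitative failure of the sharp-filter energy estimate for the 1D Saint-Venant symmetrizer: let S(U) = diag(1, 1+η), A(U) = [[u, 1+η],[1, u]] with U = (η_p, u_p), η_p(x) = -(1/2)cos(px), u_p(x) = sin(px), and let V_N = (0, sin((N-q)x)) with 0 ≤ q < p fixed. Define J_N(U, V) = ( P_N( S(U)(Id - P_N)( A(U) ∂_x(P_N V) ) ), V )_{L^2(2πT)}, where P_N is the sharp Fourier projection onto modes |k| ≤ N. Then J_N(U, V_N) = -(π/8)(N - q) + O(1) as N → ∞; in particular J_N(U, V_N) is not bounded uniformly in N even though |V_N|_{L^2} is bounded. -/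

import Mathlib

open MeasureTheory Real Complex

noncomputable section

/-- Fourier coefficient of a `2π`-periodic function on `ℝ`. -/
def fc (f : ℝ → ℂ) (k : ℤ) : ℂ :=
  (2 * π : ℂ)⁻¹ * ∫ x in Set.Ioc (-π) π, f x * Complex.exp (-(Complex.I * (k : ℂ) * (x : ℂ)))

/-- Reconstruction of a function from its Fourier coefficients. -/
def recon1 (c : ℤ → ℂ) (x : ℝ) : ℂ :=
  ∑' k : ℤ, c k * Complex.exp (Complex.I * (k : ℂ) * (x : ℂ))

/-- The sharp Fourier projection onto modes `|k| ≤ N`. -/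
def PN (N : ℕ) (f : ℝ → ℂ) : ℝ → ℂ :=
  recon1 fun k => if |k| ≤ (N : ℤ) then fc f k else 0

/-- `∂_x ∘ P_N`. -/
def DxPN (N : ℕ) (f : ℝ → ℂ) : ℝ → ℂ :=
  recon1 fun k => if |k| ≤ (N : ℤ) then Complex.I * (k : ℂ) * fc f k else 0


def ee (m : ℤ) (x : ℝ) : ℂ := Complex.exp (Complex.I * m * x)

lemma ee_cont (m : ℤ) : Continuous (ee m) := by
  unfold ee; fun_prop

lemma integrable_ee (m : ℤ) : IntegrableOn (ee m) (Set.Ioc (-π) π) volume :=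
  (ee_cont m).integrableOn_Ioc

lemma integral_ee (n : ℤ) :
    (∫ x in Set.Ioc (-π:ℝ) π, ee n x) = if n = 0 then (2*π:ℂ) else 0 := by
  rw [← intervalIntegral.integral_of_le (by linarith [Real.pi_pos] : (-π:ℝ) ≤ π)]
  by_cases h : n = 0
  · simp [h, ee, two_mul, Complex.ofReal_add]
  · rw [if_neg h]
    have hc : (Complex.I * n) ≠ 0 := by
      simp [Complex.I_ne_zero, h]
    have h2 : ∀ x : ℝ, ee n x = Complex.exp ((Complex.I * n) * x) := fun x => rfl
    simp only [h2]
    rw [integral_exp_mul_complex hc]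
    have h3 : Complex.exp (Complex.I * n * (π:ℂ)) = Complex.exp (Complex.I * n * ((-π:ℝ):ℂ)) := by
      rw [show Complex.I * n * (π:ℂ) = Complex.I * n * ((-π:ℝ):ℂ) + n * (2 * π * Complex.I) by
        push_cast; ring]
      rw [Complex.exp_add, Complex.exp_int_mul_two_pi_mul_I, mul_one]
    rw [h3, sub_self, zero_div]

lemma fc_sum (s : Finset ℤ) (c : ℤ → ℂ) (k : ℤ) :
    fc (fun x => ∑ m ∈ s, c m * ee m x) k = if k ∈ s then c k else 0 := by
  unfold fc
  have h1 : ∀ x : ℝ, (∑ m ∈ s, c m * ee m x) * Complex.exp (-(Complex.I * k * x))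
      = ∑ m ∈ s, c m * ee (m - k) x := by
    intro x
    rw [Finset.sum_mul]
    refine Finset.sum_congr rfl fun m _ => ?_
    rw [mul_assoc]
    congr 1
    unfold ee
    rw [← Complex.exp_add]
    congr 1
    push_cast
    ring
  simp only [h1]
  rw [MeasureTheory.integral_finset_sum _ (fun m _ => ((integrable_ee (m - k)).const_mul (c m)))]
  simp only [MeasureTheory.integral_const_mul]
  have h2 : ∀ m ∈ s, c m * ∫ x in Set.Ioc (-π:ℝ) π, ee (m - k) x
      = if m = k then c k * (2*π:ℂ) else 0 := by
    intro m _
    rw [integral_ee]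
    by_cases hmk : m = k
    · subst hmk; simp
    · rw [if_neg (sub_ne_zero.mpr hmk), if_neg hmk, mul_zero]
  rw [Finset.sum_congr rfl h2, Finset.sum_ite_eq' s k (fun _ => c k * (2*π:ℂ))]
  have hpi : (2*π:ℂ) ≠ 0 := by
    simp [Complex.ofReal_ne_zero, Real.pi_ne_zero]
  by_cases hks : k ∈ s
  · rw [if_pos hks, if_pos hks]
    field_simp
  · rw [if_neg hks, if_neg hks, mul_zero]

lemma recon1_sum (s : Finset ℤ) (c : ℤ → ℂ) (h : ∀ k, k ∉ s → c k = 0) (x : ℝ) :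
    recon1 c x = ∑ m ∈ s, c m * ee m x := by
  unfold recon1
  rw [tsum_eq_sum (s := s) (fun k hk => by simp [h k hk])]
  rfl

lemma PN_sum (N : ℕ) (s : Finset ℤ) (c : ℤ → ℂ) (x : ℝ) :
    PN N (fun y => ∑ m ∈ s, c m * ee m y) x
      = ∑ m ∈ s, (if |m| ≤ (N:ℤ) then c m else 0) * ee m x := by
  unfold PN
  rw [recon1_sum s _ (fun k hk => by rw [fc_sum]; simp [hk]) x]
  refine Finset.sum_congr rfl fun m hm => ?_
  rw [fc_sum]
  simp [hm]

lemma DxPN_sum (N : ℕ) (s : Finset ℤ) (c : ℤ → ℂ) (x : ℝ) :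
    DxPN N (fun y => ∑ m ∈ s, c m * ee m y) x
      = ∑ m ∈ s, (if |m| ≤ (N:ℤ) then Complex.I * m * c m else 0) * ee m x := by
  unfold DxPN
  rw [recon1_sum s _ (fun k hk => by rw [fc_sum]; simp [hk]) x]
  refine Finset.sum_congr rfl fun m hm => ?_
  rw [fc_sum]
  simp [hm]

lemma PN_apply (N : ℕ) (f : ℝ → ℂ) (s t t' : Finset ℤ) (c : ℤ → ℂ)
    (hf : ∀ y, f y = ∑ m ∈ s, c m * ee m y)
    (hst : s = t ∪ t') (hd : Disjoint t t')
    (ht : ∀ m ∈ t, |m| ≤ (N:ℤ)) (ht' : ∀ m ∈ t', ¬ |m| ≤ (N:ℤ)) (x : ℝ) :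
    PN N f x = ∑ m ∈ t, c m * ee m x := by
  rw [show f = fun y => ∑ m ∈ s, c m * ee m y from funext hf, PN_sum, hst,
    Finset.sum_union hd]
  have h1 : ∀ m ∈ t, (if |m| ≤ (N:ℤ) then c m else 0) * ee m x = c m * ee m x := by
    intro m hm; rw [if_pos (ht m hm)]
  have h2 : ∀ m ∈ t', (if |m| ≤ (N:ℤ) then c m else 0) * ee m x = 0 := by
    intro m hm; rw [if_neg (ht' m hm), zero_mul]
  rw [Finset.sum_congr rfl h1, Finset.sum_congr rfl h2, Finset.sum_const_zero, add_zero]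

lemma DxPN_apply (N : ℕ) (f : ℝ → ℂ) (s t t' : Finset ℤ) (c : ℤ → ℂ)
    (hf : ∀ y, f y = ∑ m ∈ s, c m * ee m y)
    (hst : s = t ∪ t') (hd : Disjoint t t')
    (ht : ∀ m ∈ t, |m| ≤ (N:ℤ)) (ht' : ∀ m ∈ t', ¬ |m| ≤ (N:ℤ)) (x : ℝ) :
    DxPN N f x = ∑ m ∈ t, (Complex.I * m * c m) * ee m x := by
  rw [show f = fun y => ∑ m ∈ s, c m * ee m y from funext hf, DxPN_sum, hst,
    Finset.sum_union hd]
  have h1 : ∀ m ∈ t, (if |m| ≤ (N:ℤ) then Complex.I * m * c m else 0) * ee m x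
      = (Complex.I * m * c m) * ee m x := by
    intro m hm; rw [if_pos (ht m hm)]
  have h2 : ∀ m ∈ t', (if |m| ≤ (N:ℤ) then Complex.I * m * c m else 0) * ee m x = 0 := by
    intro m hm; rw [if_neg (ht' m hm), zero_mul]
  rw [Finset.sum_congr rfl h1, Finset.sum_congr rfl h2, Finset.sum_const_zero, add_zero]

lemma sub_PN_apply (N : ℕ) (f : ℝ → ℂ) (s t t' : Finset ℤ) (c : ℤ → ℂ)
    (hf : ∀ y, f y = ∑ m ∈ s, c m * ee m y)
    (hst : s = t ∪ t') (hd : Disjoint t t')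
    (ht : ∀ m ∈ t, |m| ≤ (N:ℤ)) (ht' : ∀ m ∈ t', ¬ |m| ≤ (N:ℤ)) (x : ℝ) :
    f x - PN N f x = ∑ m ∈ t', c m * ee m x := by
  rw [PN_apply N f s t t' c hf hst hd ht ht' x, hf x, hst, Finset.sum_union hd]
  ring

lemma DxPN_zero (N : ℕ) (x : ℝ) : DxPN N (fun _ => (0:ℂ)) x = 0 := by
  have h : fc (fun _ => (0:ℂ)) = fun _ => 0 := by
    funext k; simp [fc]
  simp [DxPN, h, recon1]

lemma ee_eq_zpow (m : ℤ) (x : ℝ) : ee m x = (Complex.exp (Complex.I * x)) ^ m := by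
  unfold ee
  rw [← Complex.exp_int_mul]
  congr 1
  ring

lemma sin_eq (m : ℤ) (x : ℝ) :
    ((Real.sin ((m:ℝ) * x)) : ℂ)
      = -(Complex.I/2) * ee m x + (Complex.I/2) * ee (-m) x := by
  have h1 : ee m x = Complex.exp ((((m:ℝ)*x : ℝ):ℂ) * Complex.I) := by
    unfold ee; congr 1; push_cast; ring
  have h2 : ee (-m) x = Complex.exp (-(((m:ℝ)*x : ℝ):ℂ) * Complex.I) := by
    unfold ee; congr 1; push_cast; ring
  rw [Complex.ofReal_sin, Complex.sin, h1, h2]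
  ring

lemma cos_eq (m : ℤ) (x : ℝ) :
    ((Real.cos ((m:ℝ) * x)) : ℂ)
      = (1/2) * ee m x + (1/2) * ee (-m) x := by
  have h1 : ee m x = Complex.exp ((((m:ℝ)*x : ℝ):ℂ) * Complex.I) := by
    unfold ee; congr 1; push_cast; ring
  have h2 : ee (-m) x = Complex.exp (-(((m:ℝ)*x : ℝ):ℂ) * Complex.I) := by
    unfold ee; congr 1; push_cast; ring
  rw [Complex.ofReal_cos, Complex.cos, h1, h2]
  ring

/-- The quantity `J_N(U, V_N) = (P_N(S(U)(Id-P_N)(A(U)∂_x(P_N V_N))), V_N)_{L²}` for the 1D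
Saint-Venant symmetrizer `S(U) = diag(1, 1+η)`, `A(U) = [[u, 1+η],[1, u]]`, with
`U = (η_p, u_p)`, `η_p = -(1/2)cos(px)`, `u_p = sin(px)` and `V_N = (0, sin((N-q)x))`. -/
def JN (p q N : ℕ) : ℝ :=
  let ηc : ℝ → ℂ := fun x => ((-(1 / 2) * Real.cos (p * x) : ℝ) : ℂ)
  let uc : ℝ → ℂ := fun x => ((Real.sin (p * x) : ℝ) : ℂ)
  let V1 : ℝ → ℂ := fun _ => 0
  let V2 : ℝ → ℂ := fun x => ((Real.sin (((N : ℝ) - (q : ℝ)) * x) : ℝ) : ℂ)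
  let W1 := DxPN N V1
  let W2 := DxPN N V2
  let B1 : ℝ → ℂ := fun x => uc x * W1 x + (1 + ηc x) * W2 x
  let B2 : ℝ → ℂ := fun x => W1 x + uc x * W2 x
  let C1 : ℝ → ℂ := fun x => B1 x - PN N B1 x
  let C2 : ℝ → ℂ := fun x => B2 x - PN N B2 x
  let SC2 : ℝ → ℂ := fun x => (1 + ηc x) * C2 x
  let D1 := PN N C1
  let D2 := PN N SC2
  (∫ x in Set.Ioc (-π) π,
    (D1 x * (starRingEnd ℂ) (V1 x) + D2 x * (starRingEnd ℂ) (V2 x))).re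


lemma ee_mul (a b k : ℤ) (h : a + b = k) (x : ℝ) : ee a x * ee b x = ee k x := by
  unfold ee
  rw [← Complex.exp_add]
  congr 1
  have : ((a:ℂ) + (b:ℂ)) = (k:ℂ) := by exact_mod_cast congrArg (Int.cast : ℤ → ℂ) h
  push_cast
  linear_combination Complex.I * (x:ℂ) * this

lemma JN_eq (p q : ℕ) (hq : q < p) (N : ℕ) (hN : p + q + 1 ≤ N) :
    JN p q N = -(π/8) * ((N:ℝ) - (q:ℝ)) := by
  set M : ℤ := (N:ℤ) - (q:ℤ) with hM
  have hMR : ((M:ℝ)) = (N:ℝ) - (q:ℝ) := by push_cast [hM]; ring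
  have hV2 : ∀ x : ℝ, ((Real.sin (((N:ℝ) - (q:ℝ)) * x) : ℝ) : ℂ)
      = -(Complex.I/2) * ee M x + (Complex.I/2) * ee (-M) x := by
    intro x
    rw [show ((N:ℝ) - (q:ℝ)) = ((M:ℤ):ℝ) by rw [hMR]]
    exact sin_eq M x
  have hsinp : ∀ x : ℝ, ((Real.sin ((p:ℝ) * x) : ℝ) : ℂ)
      = -(Complex.I/2) * ee (p:ℤ) x + (Complex.I/2) * ee (-(p:ℤ)) x := by
    intro x
    rw [show ((p:ℝ)) = (((p:ℤ):ℤ):ℝ) by push_cast; ring]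
    exact sin_eq (p:ℤ) x
  have hcosp : ∀ x : ℝ, ((Real.cos ((p:ℝ) * x) : ℝ) : ℂ)
      = (1/2) * ee (p:ℤ) x + (1/2) * ee (-(p:ℤ)) x := by
    intro x
    rw [show ((p:ℝ)) = (((p:ℤ):ℤ):ℝ) by push_cast; ring]
    exact cos_eq (p:ℤ) x
  have hη : ∀ x : ℝ, (1 + ((-(1/2) * Real.cos ((p:ℝ) * x) : ℝ) : ℂ))
      = 1 - (1/4) * ee (p:ℤ) x - (1/4) * ee (-(p:ℤ)) x := by
    intro x
    rw [Complex.ofReal_mul, hcosp x]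
    push_cast
    ring
  -- Stage 1 : W2
  have hV2sum : ∀ y : ℝ, ((Real.sin (((N:ℝ) - (q:ℝ)) * y) : ℝ) : ℂ)
      = ∑ m ∈ (({M, -M} : Finset ℤ) ∪ ∅),
          (fun m => if m = M then -(Complex.I/2) else Complex.I/2) m * ee m y := by
    intro y
    rw [Finset.union_empty, Finset.sum_pair (by omega : M ≠ -M), hV2 y]
    beta_reduce
    rw [if_pos (rfl : M = M), if_neg (by omega : ¬(-M = M))]
  have hW2 : ∀ x : ℝ, DxPN N (fun x => ((Real.sin (((N:ℝ) - (q:ℝ)) * x) : ℝ) : ℂ)) x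
      = (M:ℂ)/2 * ee M x + (M:ℂ)/2 * ee (-M) x := by
    intro x
    rw [DxPN_apply N _ _ ({M, -M} : Finset ℤ) ∅ _ hV2sum rfl (Finset.disjoint_empty_right _)
      (by intro m hm; simp only [Finset.mem_insert, Finset.mem_singleton] at hm
          rcases hm with rfl | rfl <;> rw [abs_le] <;> constructor <;> omega)
      (by intro m hm; exact absurd hm (Finset.notMem_empty m)) x]
    rw [Finset.sum_pair (by omega : M ≠ -M)]
    beta_reduce
    rw [if_pos (rfl : M = M), if_neg (by omega : ¬(-M = M))]
    push_cast
    linear_combination (-(M:ℂ)/2 * (ee M x + ee (-M) x)) * Complex.I_sq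
  -- Stage 2 : B2 as a trig polynomial
  have hB2 : ∀ x : ℝ, DxPN N (fun _ : ℝ => (0:ℂ)) x
        + ((Real.sin ((p:ℝ) * x) : ℝ) : ℂ)
          * DxPN N (fun x => ((Real.sin (((N:ℝ) - (q:ℝ)) * x) : ℝ) : ℂ)) x
      = ∑ m ∈ (({M - p, p - M} : Finset ℤ) ∪ ({M + p, -(M + p)} : Finset ℤ)),
          (fun m => if m = M + p then -(Complex.I*(M:ℂ)/4)
            else if m = M - p then Complex.I*(M:ℂ)/4
            else if m = p - M then -(Complex.I*(M:ℂ)/4)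
            else Complex.I*(M:ℂ)/4) m * ee m x := by
    intro x
    have hd : Disjoint ({M - p, p - M} : Finset ℤ) ({M + p, -(M + p)} : Finset ℤ) := by
      rw [Finset.disjoint_left]
      intro a ha hb
      simp only [Finset.mem_insert, Finset.mem_singleton] at ha hb
      omega
    rw [DxPN_zero, hsinp x, hW2 x, Finset.sum_union hd,
      Finset.sum_pair (by omega : M - (p:ℤ) ≠ p - M),
      Finset.sum_pair (by omega : M + (p:ℤ) ≠ -(M + p))]
    have r1 := ee_mul (p:ℤ) M (M + p) (by ring) x
    have r2 := ee_mul (p:ℤ) (-M) (p - M) (by ring) x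
    have r3 := ee_mul (-(p:ℤ)) M (M - p) (by ring) x
    have r4 := ee_mul (-(p:ℤ)) (-M) (-(M + p)) (by ring) x
    beta_reduce
    rw [if_neg (by omega : ¬(M - (p:ℤ) = M + p)), if_pos (rfl : M - (p:ℤ) = M - p),
      if_neg (by omega : ¬((p:ℤ) - M = M + p)), if_neg (by omega : ¬((p:ℤ) - M = M - p)),
      if_pos (rfl : (p:ℤ) - M = p - M),
      if_pos (rfl : M + (p:ℤ) = M + p),
      if_neg (by omega : ¬(-(M + (p:ℤ)) = M + p)), if_neg (by omega : ¬(-(M + (p:ℤ)) = M - p)),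
      if_neg (by omega : ¬(-(M + (p:ℤ)) = p - M))]
    linear_combination (-(Complex.I*(M:ℂ)/4)) * r1 + (-(Complex.I*(M:ℂ)/4)) * r2
        + (Complex.I*(M:ℂ)/4) * r3 + (Complex.I*(M:ℂ)/4) * r4
  -- Stage 3 : C2 = (Id - PN) B2
  have hC2 : ∀ x : ℝ,
      (DxPN N (fun _ : ℝ => (0:ℂ)) x
        + ((Real.sin ((p:ℝ) * x) : ℝ) : ℂ)
          * DxPN N (fun x => ((Real.sin (((N:ℝ) - (q:ℝ)) * x) : ℝ) : ℂ)) x)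
      - PN N (fun x => DxPN N (fun _ : ℝ => (0:ℂ)) x
          + ((Real.sin ((p:ℝ) * x) : ℝ) : ℂ)
            * DxPN N (fun x => ((Real.sin (((N:ℝ) - (q:ℝ)) * x) : ℝ) : ℂ)) x) x
      = -(Complex.I*(M:ℂ)/4) * ee (M + p) x + Complex.I*(M:ℂ)/4 * ee (-(M + p)) x := by
    intro x
    have hd : Disjoint ({M - p, p - M} : Finset ℤ) ({M + p, -(M + p)} : Finset ℤ) := by
      rw [Finset.disjoint_left]
      intro a ha hb
      simp only [Finset.mem_insert, Finset.mem_singleton] at ha hb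
      omega
    rw [sub_PN_apply N _ _ ({M - p, p - M} : Finset ℤ) ({M + p, -(M + p)} : Finset ℤ) _
      hB2 rfl hd
      (by intro m hm; simp only [Finset.mem_insert, Finset.mem_singleton] at hm
          rcases hm with rfl | rfl <;> rw [abs_le] <;> constructor <;> omega)
      (by intro m hm; simp only [Finset.mem_insert, Finset.mem_singleton] at hm
          rw [abs_le]
          rcases hm with rfl | rfl <;> omega) x]
    rw [Finset.sum_pair (by omega : M + (p:ℤ) ≠ -(M + p))]
    beta_reduce
    rw [if_pos (rfl : M + (p:ℤ) = M + p),
      if_neg (by omega : ¬(-(M + (p:ℤ)) = M + p)), if_neg (by omega : ¬(-(M + (p:ℤ)) = M - p)),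
      if_neg (by omega : ¬(-(M + (p:ℤ)) = p - M))]
    try ring
  -- Stage 4 : SC2 = (1+η) C2 as a trig polynomial
  have hSC2 : ∀ x : ℝ,
      (1 + ((-(1/2) * Real.cos ((p:ℝ) * x) : ℝ) : ℂ))
        * ((DxPN N (fun _ : ℝ => (0:ℂ)) x
            + ((Real.sin ((p:ℝ) * x) : ℝ) : ℂ)
              * DxPN N (fun x => ((Real.sin (((N:ℝ) - (q:ℝ)) * x) : ℝ) : ℂ)) x)
          - PN N (fun x => DxPN N (fun _ : ℝ => (0:ℂ)) x
              + ((Real.sin ((p:ℝ) * x) : ℝ) : ℂ)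
                * DxPN N (fun x => ((Real.sin (((N:ℝ) - (q:ℝ)) * x) : ℝ) : ℂ)) x) x)
      = ∑ m ∈ (({M, -M} : Finset ℤ) ∪ ({M + p, -(M + p), M + p + p, -(M + p + p)} : Finset ℤ)),
          (fun m => if m = M then Complex.I*(M:ℂ)/16
            else if m = -M then -(Complex.I*(M:ℂ)/16)
            else if m = M + p then -(Complex.I*(M:ℂ)/4)
            else if m = -(M + p) then Complex.I*(M:ℂ)/4
            else if m = M + p + p then Complex.I*(M:ℂ)/16
            else -(Complex.I*(M:ℂ)/16)) m * ee m x := by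
    intro x
    have hd : Disjoint ({M, -M} : Finset ℤ)
        ({M + p, -(M + p), M + p + p, -(M + p + p)} : Finset ℤ) := by
      rw [Finset.disjoint_left]
      intro a ha hb
      simp only [Finset.mem_insert, Finset.mem_singleton] at ha hb
      omega
    rw [hC2 x, hη x, Finset.sum_union hd,
      Finset.sum_pair (by omega : M ≠ -M),
      Finset.sum_insert (by
        simp only [Finset.mem_insert, Finset.mem_singleton]; push_neg
        refine ⟨by omega, by omega, by omega⟩),
      Finset.sum_insert (by
        simp only [Finset.mem_insert, Finset.mem_singleton]; push_neg
        refine ⟨by omega, by omega⟩),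
      Finset.sum_pair (by omega : M + (p:ℤ) + p ≠ -(M + p + p))]
    have r1 := ee_mul (p:ℤ) (M + p) (M + p + p) (by ring) x
    have r2 := ee_mul (p:ℤ) (-(M + p)) (-M) (by ring) x
    have r3 := ee_mul (-(p:ℤ)) (M + p) M (by ring) x
    have r4 := ee_mul (-(p:ℤ)) (-(M + p)) (-(M + p + p)) (by ring) x
    beta_reduce
    rw [if_pos (rfl : M = M),
      if_neg (by omega : ¬(-M = M)), if_pos (rfl : -M = -M),
      if_neg (by omega : ¬(M + (p:ℤ) = M)), if_neg (by omega : ¬(M + (p:ℤ) = -M)),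
      if_pos (rfl : M + (p:ℤ) = M + p),
      if_neg (by omega : ¬(-(M + (p:ℤ)) = M)), if_neg (by omega : ¬(-(M + (p:ℤ)) = -M)),
      if_neg (by omega : ¬(-(M + (p:ℤ)) = M + p)), if_pos (rfl : -(M + (p:ℤ)) = -(M + p)),
      if_neg (by omega : ¬(M + (p:ℤ) + p = M)), if_neg (by omega : ¬(M + (p:ℤ) + p = -M)),
      if_neg (by omega : ¬(M + (p:ℤ) + p = M + p)), if_neg (by omega : ¬(M + (p:ℤ) + p = -(M + p))),
      if_pos (rfl : M + (p:ℤ) + p = M + p + p),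
      if_neg (by omega : ¬(-(M + (p:ℤ) + p) = M)), if_neg (by omega : ¬(-(M + (p:ℤ) + p) = -M)),
      if_neg (by omega : ¬(-(M + (p:ℤ) + p) = M + p)),
      if_neg (by omega : ¬(-(M + (p:ℤ) + p) = -(M + p))),
      if_neg (by omega : ¬(-(M + (p:ℤ) + p) = M + p + p))]
    linear_combination (Complex.I*(M:ℂ)/16) * r1 + (-(Complex.I*(M:ℂ)/16)) * r2
        + (Complex.I*(M:ℂ)/16) * r3 + (-(Complex.I*(M:ℂ)/16)) * r4
  -- Stage 5 : D2 = PN SC2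
  have hD2 : ∀ x : ℝ,
      PN N (fun x => (1 + ((-(1/2) * Real.cos ((p:ℝ) * x) : ℝ) : ℂ))
        * ((DxPN N (fun _ : ℝ => (0:ℂ)) x
            + ((Real.sin ((p:ℝ) * x) : ℝ) : ℂ)
              * DxPN N (fun x => ((Real.sin (((N:ℝ) - (q:ℝ)) * x) : ℝ) : ℂ)) x)
          - PN N (fun x => DxPN N (fun _ : ℝ => (0:ℂ)) x
              + ((Real.sin ((p:ℝ) * x) : ℝ) : ℂ)
                * DxPN N (fun x => ((Real.sin (((N:ℝ) - (q:ℝ)) * x) : ℝ) : ℂ)) x) x)) x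
      = Complex.I*(M:ℂ)/16 * ee M x - Complex.I*(M:ℂ)/16 * ee (-M) x := by
    intro x
    have hd : Disjoint ({M, -M} : Finset ℤ)
        ({M + p, -(M + p), M + p + p, -(M + p + p)} : Finset ℤ) := by
      rw [Finset.disjoint_left]
      intro a ha hb
      simp only [Finset.mem_insert, Finset.mem_singleton] at ha hb
      omega
    rw [PN_apply N _ _ ({M, -M} : Finset ℤ)
      ({M + p, -(M + p), M + p + p, -(M + p + p)} : Finset ℤ) _ hSC2 rfl hd
      (by intro m hm; simp only [Finset.mem_insert, Finset.mem_singleton] at hm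
          rcases hm with rfl | rfl <;> rw [abs_le] <;> constructor <;> omega)
      (by intro m hm; simp only [Finset.mem_insert, Finset.mem_singleton] at hm
          rw [abs_le]
          rcases hm with rfl | rfl | rfl | rfl <;> omega) x]
    rw [Finset.sum_pair (by omega : M ≠ -M)]
    beta_reduce
    rw [if_pos (rfl : M = M), if_neg (by omega : ¬(-M = M)), if_pos (rfl : -M = -M)]
    try ring
  -- assemble
  unfold JN
  simp only [map_zero, mul_zero, zero_add]
  rw [MeasureTheory.setIntegral_congr_fun measurableSet_Ioc
    (show Set.EqOn _ (fun x : ℝ => (M:ℂ)/32 * ee (M + M) x - (M:ℂ)/16 * ee 0 x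
        + (M:ℂ)/32 * ee (-(M + M)) x) (Set.Ioc (-π) π) from fun x _ => by
      rw [hD2 x, Complex.conj_ofReal, hV2 x]
      have rA := ee_mul M M (M + M) (by ring) x
      have rB := ee_mul M (-M) 0 (by ring) x
      have rC := ee_mul (-M) (-M) (-(M + M)) (by ring) x
      linear_combination (-(Complex.I^2*(M:ℂ)/32)) * rA + (Complex.I^2*(M:ℂ)/16) * rB
        + (-(Complex.I^2*(M:ℂ)/32)) * rC
        + (-(M:ℂ)/32 * ee (M + M) x + (M:ℂ)/16 * ee 0 x - (M:ℂ)/32 * ee (-(M + M)) x)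
          * Complex.I_sq)]
  have i1 : MeasureTheory.IntegrableOn (fun x : ℝ => (M:ℂ)/32 * ee (M + M) x)
      (Set.Ioc (-π) π) volume := (integrable_ee _).const_mul _
  have i2 : MeasureTheory.IntegrableOn (fun x : ℝ => (M:ℂ)/16 * ee 0 x)
      (Set.Ioc (-π) π) volume := (integrable_ee _).const_mul _
  have i3 : MeasureTheory.IntegrableOn (fun x : ℝ => (M:ℂ)/32 * ee (-(M + M)) x)
      (Set.Ioc (-π) π) volume := (integrable_ee _).const_mul _
  have i12 : MeasureTheory.IntegrableOn
      (fun x : ℝ => (M:ℂ)/32 * ee (M + M) x - (M:ℂ)/16 * ee 0 x)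
      (Set.Ioc (-π) π) volume := i1.sub i2
  rw [MeasureTheory.integral_add i12 i3, MeasureTheory.integral_sub i1 i2]
  simp only [MeasureTheory.integral_const_mul]
  rw [integral_ee, integral_ee, integral_ee, if_neg (by omega : ¬ M + M = 0),
    if_pos rfl, if_neg (by omega : ¬ -(M + M) = 0)]
  rw [show ((M:ℂ)/32 * 0 - (M:ℂ)/16 * (2*(π:ℂ)) + (M:ℂ)/32 * 0)
      = ((-(M:ℝ) * π / 8 : ℝ) : ℂ) by push_cast; ring]
  rw [Complex.ofReal_re, hMR]
  ring

/-- Quantitative failure of the sharp-filter energy estimate for the 1D Saint-Venant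
symmetrizer: `J_N(U, V_N) = -(π/8)(N - q) + O(1)` as `N → ∞`; in particular `J_N(U, V_N)`
is not bounded uniformly in `N`, even though `|V_N|_{L²}` is bounded. -/
theorem sharp_filter_energy_failure (p q : ℕ) (hq : q < p) :
    (∃ C : ℝ, ∀ N : ℕ, |JN p q N + π / 8 * ((N : ℝ) - (q : ℝ))| ≤ C) ∧
    (∃ C' : ℝ, ∀ N : ℕ,
      Real.sqrt (∫ x in Set.Ioc (-π) π, Real.sin (((N : ℝ) - (q : ℝ)) * x) ^ 2) ≤ C') ∧
    ¬ ∃ C'' : ℝ, ∀ N : ℕ, |JN p q N| ≤ C'' := by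
  have hpi := Real.pi_pos
  refine ⟨⟨∑ n ∈ Finset.range (p+q+1), |JN p q n + π/8*((n:ℝ)-(q:ℝ))|, fun N => ?_⟩,
    ⟨Real.sqrt (2*π), fun N => ?_⟩, ?_⟩
  · by_cases h : N < p + q + 1
    · exact Finset.single_le_sum (f := fun n => |JN p q n + π/8*((n:ℝ)-(q:ℝ))|)
        (fun i _ => abs_nonneg _) (Finset.mem_range.mpr h)
    · rw [JN_eq p q hq N (by omega)]
      rw [show -(π/8) * ((N:ℝ)-(q:ℝ)) + π/8*((N:ℝ)-(q:ℝ)) = 0 by ring, abs_zero]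
      exact Finset.sum_nonneg fun i _ => abs_nonneg _
  · have h1 : (∫ x in Set.Ioc (-π) π, Real.sin (((N:ℝ)-(q:ℝ))*x)^2)
        ≤ ∫ x in Set.Ioc (-π:ℝ) π, (1:ℝ) := by
      apply MeasureTheory.setIntegral_mono_on
      · exact ((Real.continuous_sin.comp (by fun_prop)).pow 2).integrableOn_Ioc
      · exact (MeasureTheory.integrableOn_const_iff (C := (1:ℝ))).mpr
          (Or.inr (by rw [Real.volume_Ioc]; exact ENNReal.ofReal_lt_top))
      · exact measurableSet_Ioc
      · intro x _
        exact Real.sin_sq_le_one _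
    have h2 : (∫ x in Set.Ioc (-π:ℝ) π, (1:ℝ)) = 2*π := by
      rw [MeasureTheory.setIntegral_const, smul_eq_mul, mul_one, Real.volume_real_Ioc_of_le (by linarith : (-π:ℝ) ≤ π)]
      ring
    exact Real.sqrt_le_sqrt (by linarith)
  · rintro ⟨C, hC⟩
    have hC0 : 0 ≤ C := le_trans (abs_nonneg _) (hC 0)
    obtain ⟨n, hn⟩ := exists_nat_gt (8*C/π + (p:ℝ) + (q:ℝ) + 1 + (q:ℝ))
    have h8C : 0 ≤ 8*C/π := div_nonneg (by linarith) hpi.le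
    have hn1 : p + q + 1 ≤ n := by
      have hpn : ((p:ℝ) + q + 1) < (n:ℝ) := by
        have hq0 : (0:ℝ) ≤ (q:ℝ) := Nat.cast_nonneg q
        linarith
      have : ((p+q+1 : ℕ):ℝ) < ((n:ℕ):ℝ) := by push_cast; linarith
      exact_mod_cast this.le
    have hqn : (q:ℝ) ≤ (n:ℝ) := by
      have : q ≤ n := by omega
      exact_mod_cast this
    have habs : |JN p q n| = π/8 * ((n:ℝ)-(q:ℝ)) := by
      rw [JN_eq p q hq n hn1,
        abs_of_nonpos (by nlinarith : -(π/8)*((n:ℝ)-(q:ℝ)) ≤ 0)]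
      ring
    have hle := hC n
    rw [habs] at hle
    have hd : 8*C/π < (n:ℝ) - (q:ℝ) := by
      have hp0 : (0:ℝ) ≤ (p:ℝ) := Nat.cast_nonneg p
      have hq0 : (0:ℝ) ≤ (q:ℝ) := Nat.cast_nonneg q
      linarith
    have hd2 : 8*C < ((n:ℝ) - (q:ℝ)) * π := (div_lt_iff₀ hpi).mp hd
    linarith

end
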